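/- Let t_1, …, t_n be i.i.d. real random variables with continuous CDF F, let t_{(k)} be the k-th order statistic, and let k̂ be an ε-approximate rank of t_{(k)}, i.e. |k̂ − k| ≤ εn. If X is a fresh independent sample from F, then |P(X ≤ t_{(k)}) − (k̂ + 0.5)/(n+1)| ≤ (⌊εn⌋ + 0.5)/(n+1). -/

import Mathlib

open MeasureTheory ProbabilityTheory
open scoped ENNReal

/-- The `k`-th order statistic (1-indexed) of a finite family of reals: the smallest `x`
such that at least `k` of the values are `≤ x`. -/
noncomputable def orderStat {ι : Type*} [Fintype ι] (t : ι → ℝ) (k : ℕ) : ℝ :=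
  sInf {x : ℝ | k ≤ (Finset.univ.filter fun i => t i ≤ x).card}

section Det

variable {n : ℕ} (t : Fin n → ℝ) (k : ℕ)

lemma os_filter_le_mono {x y : ℝ} (h : x ≤ y) :
    (Finset.univ.filter fun i => t i ≤ x) ⊆ (Finset.univ.filter fun i => t i ≤ y) := by
  intro i hi
  simp only [Finset.mem_filter, Finset.mem_univ, true_and] at hi ⊢
  exact hi.trans h

lemma os_bddBelow (hk1 : 1 ≤ k) (hkn : k ≤ n) :
    BddBelow {x : ℝ | k ≤ (Finset.univ.filter fun i => t i ≤ x).card} := by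
  have hn : 0 < n := lt_of_lt_of_le hk1 hkn
  obtain ⟨i0⟩ : Nonempty (Fin n) := ⟨⟨0, hn⟩⟩
  refine ⟨(Finset.univ.image t).min' ⟨t i0, Finset.mem_image_of_mem t (Finset.mem_univ i0)⟩,
    fun x hx => ?_⟩
  have hxne : (Finset.univ.filter fun i => t i ≤ x).Nonempty := by
    rw [← Finset.card_pos]; exact lt_of_lt_of_le hk1 hx
  obtain ⟨i, hi⟩ := hxne
  simp only [Finset.mem_filter, Finset.mem_univ, true_and] at hi
  exact le_trans (Finset.min'_le _ _ (Finset.mem_image_of_mem t (Finset.mem_univ i))) hi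

lemma os_nonempty (hk1 : 1 ≤ k) (hkn : k ≤ n) :
    {x : ℝ | k ≤ (Finset.univ.filter fun i => t i ≤ x).card}.Nonempty := by
  have hn : 0 < n := lt_of_lt_of_le hk1 hkn
  obtain ⟨i0⟩ : Nonempty (Fin n) := ⟨⟨0, hn⟩⟩
  refine ⟨(Finset.univ.image t).max' ⟨t i0, Finset.mem_image_of_mem t (Finset.mem_univ i0)⟩, ?_⟩
  have h1 : (Finset.univ.filter fun i => t i ≤ (Finset.univ.image t).max'
      ⟨t i0, Finset.mem_image_of_mem t (Finset.mem_univ i0)⟩) = Finset.univ := by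
    refine Finset.filter_true_of_mem fun i _ => ?_
    exact Finset.le_max' _ _ (Finset.mem_image_of_mem t (Finset.mem_univ i))
  simp only [Set.mem_setOf_eq, h1, Finset.card_univ, Fintype.card_fin]
  exact hkn

lemma orderStat_mem (hk1 : 1 ≤ k) (hkn : k ≤ n) :
    k ≤ (Finset.univ.filter fun i => t i ≤ orderStat t k).card := by
  by_contra hcon
  push_neg at hcon
  set v := orderStat t k with hv
  have hU : (Finset.univ.filter fun i => v < t i).Nonempty := by
    rw [Finset.filter_nonempty_iff]
    by_contra h
    push_neg at h
    refine absurd hcon ?_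
    push_neg
    calc k ≤ n := hkn
      _ = (Finset.univ.filter fun i => t i ≤ v).card := by
          rw [Finset.filter_true_of_mem
            (fun i _ => (h i (Finset.mem_univ i)))]
          simp
  set w := ((Finset.univ.filter fun i => v < t i).image t).min' (hU.image t) with hw
  have hvw : v < w := by
    obtain ⟨i, hi, hit⟩ := Finset.mem_image.mp (Finset.min'_mem _ (hU.image t))
    simp only [Finset.mem_filter, Finset.mem_univ, true_and] at hi
    rw [hw, ← hit]; exact hi
  have hlb : ∀ x ∈ {x : ℝ | k ≤ (Finset.univ.filter fun i => t i ≤ x).card}, w ≤ x := by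
    intro x hx
    by_contra hxw
    push_neg at hxw
    have hsub : (Finset.univ.filter fun i => t i ≤ x) ⊆
        (Finset.univ.filter fun i => t i ≤ v) := by
      intro i hi
      simp only [Finset.mem_filter, Finset.mem_univ, true_and] at hi ⊢
      by_contra hvi
      push_neg at hvi
      have : w ≤ t i := Finset.min'_le _ _ (Finset.mem_image_of_mem t (by
        simp only [Finset.mem_filter, Finset.mem_univ, true_and]; exact hvi))
      linarith
    exact absurd (le_trans hx (Finset.card_le_card hsub)) (by omega)
  have : w ≤ v := le_csInf (os_nonempty t k hk1 hkn) hlb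
  linarith

lemma orderStat_is_value (hk1 : 1 ≤ k) (hkn : k ≤ n) : ∃ j, t j = orderStat t k := by
  by_contra h
  push_neg at h
  set v := orderStat t k with hv
  have hL : (Finset.univ.filter fun i => t i ≤ v).Nonempty := by
    rw [← Finset.card_pos]
    exact lt_of_lt_of_le hk1 (orderStat_mem t k hk1 hkn)
  set u := ((Finset.univ.filter fun i => t i ≤ v).image t).max' (hL.image t) with hu
  have huv : u < v := by
    obtain ⟨i, hi, hit⟩ := Finset.mem_image.mp (Finset.max'_mem _ (hL.image t))
    simp only [Finset.mem_filter, Finset.mem_univ, true_and] at hi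
    rw [hu, ← hit]
    exact lt_of_le_of_ne hi (h i)
  have huS : u ∈ {x : ℝ | k ≤ (Finset.univ.filter fun i => t i ≤ x).card} := by
    have hsub : (Finset.univ.filter fun i => t i ≤ v) ⊆
        (Finset.univ.filter fun i => t i ≤ u) := by
      intro i hi
      have hi' := hi
      simp only [Finset.mem_filter, Finset.mem_univ, true_and] at hi' ⊢
      exact Finset.le_max' _ _ (Finset.mem_image_of_mem t hi)
    exact le_trans (orderStat_mem t k hk1 hkn) (Finset.card_le_card hsub)
  have := csInf_le (os_bddBelow t k hk1 hkn) huS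
  exact absurd this (not_le.mpr huv)

/-- Key deterministic characterization: if `x` differs from all values, then
`x ≤ orderStat t k` iff fewer than `k` values are strictly below `x`. -/
lemma le_orderStat_iff (hk1 : 1 ≤ k) (hkn : k ≤ n) {x : ℝ} (hx : ∀ j, x ≠ t j) :
    x ≤ orderStat t k ↔ (Finset.univ.filter fun i => t i < x).card < k := by
  have heq : (Finset.univ.filter fun i => t i < x) =
      (Finset.univ.filter fun i => t i ≤ x) := by
    refine Finset.filter_congr fun i _ => ?_
    constructor
    · exact le_of_lt
    · intro h; exact lt_of_le_of_ne h fun he => hx i he.symm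
  constructor
  · intro hle
    obtain ⟨j0, hj0⟩ := orderStat_is_value t k hk1 hkn
    have hlt : x < orderStat t k := lt_of_le_of_ne hle (by rw [← hj0]; exact hx j0)
    have hxS : x ∉ {y : ℝ | k ≤ (Finset.univ.filter fun i => t i ≤ y).card} := by
      intro hxS
      exact absurd (csInf_le (os_bddBelow t k hk1 hkn) hxS) (not_le.mpr hlt)
    simp only [Set.mem_setOf_eq, not_le] at hxS
    rw [heq]; exact hxS
  · intro hlt
    by_contra hle
    push_neg at hle
    have hsub : (Finset.univ.filter fun i => t i ≤ orderStat t k) ⊆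
        (Finset.univ.filter fun i => t i ≤ x) := os_filter_le_mono t hle.le
    have := le_trans (orderStat_mem t k hk1 hkn) (Finset.card_le_card hsub)
    rw [heq] at hlt
    omega

end Det

section Comb

lemma rank_inj {m : ℕ} {y : Fin (m + 1) → ℝ} (hy : Function.Injective y) {i i' : Fin (m + 1)}
    (h : (Finset.univ.filter fun j => y j < y i).card
       = (Finset.univ.filter fun j => y j < y i').card) : i = i' := by
  have key : ∀ a b : Fin (m + 1), y a < y b →
      (Finset.univ.filter fun j => y j < y a).card
        < (Finset.univ.filter fun j => y j < y b).card := by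
    intro a b hab
    have hsub : insert a (Finset.univ.filter fun j => y j < y a)
        ⊆ (Finset.univ.filter fun j => y j < y b) := by
      intro c hc
      rcases Finset.mem_insert.mp hc with rfl | hc
      · simp only [Finset.mem_filter, Finset.mem_univ, true_and]; exact hab
      · simp only [Finset.mem_filter, Finset.mem_univ, true_and] at hc ⊢
        exact hc.trans hab
    have hna : a ∉ (Finset.univ.filter fun j => y j < y a) := by
      simp
    calc (Finset.univ.filter fun j => y j < y a).card
        < (insert a (Finset.univ.filter fun j => y j < y a)).card := by
          rw [Finset.card_insert_of_notMem hna]; omega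
      _ ≤ _ := Finset.card_le_card hsub
  rcases lt_trichotomy (y i) (y i') with hlt | heq | hgt
  · exact absurd h (Nat.ne_of_lt (key i i' hlt))
  · exact hy heq
  · exact absurd h.symm (Nat.ne_of_lt (key i' i hgt))

lemma rank_surj {m : ℕ} {y : Fin (m + 1) → ℝ} (hy : Function.Injective y) {r : ℕ}
    (hr : r ≤ m) : ∃ i, (Finset.univ.filter fun j => y j < y i).card = r := by
  have hbnd : ∀ i : Fin (m + 1), (Finset.univ.filter fun j => y j < y i).card < m + 1 := by
    intro i
    have hsub : (Finset.univ.filter fun j => y j < y i) ⊆ Finset.univ.erase i := by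
      intro c hc
      simp only [Finset.mem_filter, Finset.mem_univ, true_and] at hc
      exact Finset.mem_erase.mpr ⟨fun hci => absurd hc (by rw [hci]; exact lt_irrefl _),
        Finset.mem_univ c⟩
    have := Finset.card_le_card hsub
    rw [Finset.card_erase_of_mem (Finset.mem_univ i), Finset.card_univ, Fintype.card_fin] at this
    omega
  set f : Fin (m + 1) → Fin (m + 1) :=
    fun i => ⟨(Finset.univ.filter fun j => y j < y i).card, hbnd i⟩ with hf
  have hinj : Function.Injective f := by
    intro a b hab
    exact rank_inj hy (congrArg Fin.val hab)
  have hsurj : Function.Surjective f := Finite.surjective_of_injective hinj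
  obtain ⟨i, hi⟩ := hsurj ⟨r, by omega⟩
  exact ⟨i, congrArg Fin.val hi⟩

lemma map_vec_eq_pi {Ω : Type*} [MeasureSpace Ω] [IsProbabilityMeasure (ℙ : Measure Ω)]
    {n : ℕ} {t : Fin n → Ω → ℝ} {μ : Measure ℝ} [IsProbabilityMeasure μ]
    (hmeas : ∀ j, Measurable (t j)) (hlaw : ∀ j, Measure.map (t j) ℙ = μ)
    (hindep : iIndepFun t ℙ) :
    Measure.map (fun ω j => t j ω) ℙ = Measure.pi fun _ : Fin n => μ := by
  refine (Measure.pi_eq fun s hs => ?_).symm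
  rw [Measure.map_apply (measurable_pi_lambda _ fun j => hmeas j) (MeasurableSet.univ_pi hs)]
  have hpre : (fun ω j => t j ω) ⁻¹' Set.pi Set.univ s = ⋂ j ∈ Finset.univ, t j ⁻¹' s j := by
    ext ω
    simp [Set.mem_pi]
  rw [hpre, hindep.measure_inter_preimage_eq_mul Finset.univ fun i _ => hs i]
  exact Finset.prod_congr rfl fun j _ => by rw [← hlaw j, Measure.map_apply (hmeas j) (hs j)]

end Comb

section Meas

variable {μ : Measure ℝ} [IsProbabilityMeasure μ]

lemma os_atomless (hcont : Continuous fun x => (μ (Set.Iic x)).toReal) (a : ℝ) :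
    μ {a} = 0 := by
  have h1 : ⇑(cdf μ) = fun x => (μ (Set.Iic x)).toReal := funext fun x => by rw [cdf_eq_real]; rfl
  have h2 : (cdf μ).measure = μ := measure_cdf μ
  rw [← h2, StieltjesFunction.measure_singleton]
  have h3 : Function.leftLim (⇑(cdf μ)) a = cdf μ a := by
    refine leftLim_eq_of_tendsto ?_
    rw [h1]
    exact (hcont.tendsto a).mono_left nhdsWithin_le_nhds
  rw [h3, sub_self, ENNReal.ofReal_zero]

lemma pi_diag_null (hatom : ∀ a : ℝ, μ {a} = 0) {m : ℕ} (i j : Fin (m + 1)) (hij : j ≠ i) :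
    Measure.pi (fun _ : Fin (m + 1) => μ) {y | y i = y j} = 0 := by
  obtain ⟨j', hj'⟩ := Fin.exists_succAbove_eq hij
  have hmp := measurePreserving_piFinSuccAbove (fun _ : Fin (m + 1) => μ) i
  set e := MeasurableEquiv.piFinSuccAbove (fun _ : Fin (m + 1) => ℝ) i with he
  have hD : MeasurableSet {p : ℝ × (Fin m → ℝ) | p.1 = p.2 j'} :=
    measurableSet_eq_fun measurable_fst (measurable_snd.eval)
  have hpre : {y : Fin (m + 1) → ℝ | y i = y j} = e ⁻¹' {p | p.1 = p.2 j'} := by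
    ext y
    simp only [Set.mem_setOf_eq, Set.mem_preimage, he, MeasurableEquiv.piFinSuccAbove_apply]
    rw [← hj']
    rfl
  rw [hpre, ← Measure.map_apply e.measurable hD, hmp.map_eq, Measure.prod_apply hD]
  have h5 : ∀ x : ℝ, Prod.mk x ⁻¹' {p : ℝ × (Fin m → ℝ) | p.1 = p.2 j'}
      = {z : Fin m → ℝ | x = z j'} := fun x => rfl
  have h6 : ∀ x : ℝ, (Measure.pi fun _ : Fin m => μ) {z : Fin m → ℝ | x = z j'} = 0 := by
    intro x
    have h4 : {z : Fin m → ℝ | x = z j'} = (fun z : Fin m → ℝ => z j') ⁻¹' {x} := by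
      ext z; simp [eq_comm]
    rw [h4]
    exact Measure.pi_eval_preimage_null _ (hatom x)
  simp only [h5, h6, lintegral_zero]

lemma measurable_card_filter {m : ℕ} (i : Fin (m + 1)) :
    Measurable fun y : Fin (m + 1) → ℝ =>
      (Finset.univ.filter fun j => y j < y i).card := by
  have h : (fun y : Fin (m + 1) → ℝ => (Finset.univ.filter fun j => y j < y i).card)
      = fun y => ∑ j : Fin (m + 1), if y j < y i then 1 else 0 := by
    funext y
    rw [Finset.card_filter]
  rw [h]
  exact Finset.measurable_sum _ fun j _ =>
    Measurable.ite (measurableSet_lt (measurable_pi_apply j) (measurable_pi_apply i))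
      measurable_const measurable_const

lemma pi_card_swap {m : ℕ} (i : Fin (m + 1)) (r : ℕ) :
    Measure.pi (fun _ : Fin (m + 1) => μ)
        {y | (Finset.univ.filter fun j => y j < y i).card = r}
      = Measure.pi (fun _ : Fin (m + 1) => μ)
        {y | (Finset.univ.filter fun j => y j < y 0).card = r} := by
  have hmp := measurePreserving_piCongrLeft (fun _ : Fin (m + 1) => μ) (Equiv.swap 0 i)
  set Φ := MeasurableEquiv.piCongrLeft (fun _ : Fin (m + 1) => ℝ) (Equiv.swap 0 i) with hΦ
  have happ : ∀ (y : Fin (m + 1) → ℝ) (l : Fin (m + 1)), Φ y l = y (Equiv.swap 0 i l) := by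
    intro y l
    have h0 := MeasurableEquiv.piCongrLeft_apply_apply (Equiv.swap 0 i)
      (β := fun _ : Fin (m + 1) => ℝ) y (Equiv.swap 0 i l)
    rw [Equiv.swap_apply_self] at h0
    exact h0
  have hS : MeasurableSet {y : Fin (m + 1) → ℝ |
      (Finset.univ.filter fun j => y j < y i).card = r} :=
    measurable_card_filter i (MeasurableSet.singleton r)
  have hpre : Φ ⁻¹' {y | (Finset.univ.filter fun j => y j < y i).card = r}
      = {y | (Finset.univ.filter fun j => y j < y 0).card = r} := by
    ext y
    simp only [Set.mem_preimage, Set.mem_setOf_eq]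
    have h2 : Φ y i = y 0 := by rw [happ, Equiv.swap_apply_right]
    have hcard : (Finset.univ.filter fun j => Φ y j < Φ y i).card
        = (Finset.univ.filter fun j => y j < y 0).card := by
      refine Finset.card_bij' (fun j _ => Equiv.swap 0 i j) (fun j _ => Equiv.swap 0 i j)
        ?_ ?_ ?_ ?_
      · intro a ha
        simp only [Finset.mem_filter, Finset.mem_univ, true_and] at ha ⊢
        rwa [happ, h2] at ha
      · intro a ha
        simp only [Finset.mem_filter, Finset.mem_univ, true_and] at ha ⊢
        rw [happ, h2, Equiv.swap_apply_self]
        exact ha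
      · intro a _; exact Equiv.swap_apply_self _ _ _
      · intro a _; exact Equiv.swap_apply_self _ _ _
    rw [hcard]
  calc Measure.pi (fun _ : Fin (m + 1) => μ)
        {y | (Finset.univ.filter fun j => y j < y i).card = r}
      = (Measure.map Φ (Measure.pi fun _ : Fin (m + 1) => μ))
        {y | (Finset.univ.filter fun j => y j < y i).card = r} := by rw [hmp.map_eq]
    _ = Measure.pi (fun _ : Fin (m + 1) => μ)
        (Φ ⁻¹' {y | (Finset.univ.filter fun j => y j < y i).card = r}) :=
        Measure.map_apply Φ.measurable hS
    _ = _ := by rw [hpre]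

lemma noninj_measurable_null (hatom : ∀ a : ℝ, μ {a} = 0) (m : ℕ) :
    MeasurableSet {y : Fin (m + 1) → ℝ | ¬ Function.Injective y}
      ∧ Measure.pi (fun _ : Fin (m + 1) => μ) {y | ¬ Function.Injective y} = 0 := by
  have hNeq : {y : Fin (m + 1) → ℝ | ¬ Function.Injective y}
      = ⋃ (p : Fin (m + 1) × Fin (m + 1)), ⋃ (_ : p.2 ≠ p.1), {y | y p.1 = y p.2} := by
    ext y
    simp only [Set.mem_setOf_eq, Set.mem_iUnion, Function.Injective, not_forall]
    constructor
    · rintro ⟨a, b, hab, hne⟩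
      exact ⟨(a, b), hne ∘ Eq.symm ∘ id, hab⟩
    · rintro ⟨⟨a, b⟩, hne, hab⟩
      exact ⟨a, b, hab, fun h => hne h.symm⟩
  constructor
  · rw [hNeq]
    refine MeasurableSet.iUnion fun p => MeasurableSet.iUnion fun _ => ?_
    exact measurableSet_eq_fun (measurable_pi_apply p.1) (measurable_pi_apply p.2)
  · rw [hNeq]
    refine measure_iUnion_null fun p => measure_iUnion_null fun hne => ?_
    exact pi_diag_null hatom p.1 p.2 hne

lemma pi_card_eq (hatom : ∀ a : ℝ, μ {a} = 0) {m r : ℕ} (hr : r ≤ m) :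
    Measure.pi (fun _ : Fin (m + 1) => μ)
      {y | (Finset.univ.filter fun j => y j < y 0).card = r} = 1 / ((m : ℝ≥0∞) + 1) := by
  set π := Measure.pi (fun _ : Fin (m + 1) => μ) with hπ
  set N : Set (Fin (m + 1) → ℝ) := {y | ¬ Function.Injective y} with hNdef
  obtain ⟨hNmeas, hNnull⟩ := noninj_measurable_null hatom m
  set C : Fin (m + 1) → Set (Fin (m + 1) → ℝ) :=
    fun i => {y | (Finset.univ.filter fun j => y j < y i).card = r} with hC
  set D : Fin (m + 1) → Set (Fin (m + 1) → ℝ) := fun i => C i \ N with hD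
  have hCmeas : ∀ i, MeasurableSet (C i) :=
    fun i => measurable_card_filter i (MeasurableSet.singleton r)
  have hDmeas : ∀ i, MeasurableSet (D i) := fun i => (hCmeas i).diff hNmeas
  have hdisj : Pairwise (Function.onFun Disjoint D) := by
    intro a b hab
    rw [Function.onFun, Set.disjoint_left]
    intro y hya hyb
    refine hab ?_
    have hyinj : Function.Injective y := not_not.mp hya.2
    have h1 : (Finset.univ.filter fun j => y j < y a).card = r := hya.1
    have h2 : (Finset.univ.filter fun j => y j < y b).card = r := hyb.1
    exact rank_inj hyinj (h1.trans h2.symm)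
  have hcover : (⋃ i, D i) = Set.univ \ N := by
    apply Set.Subset.antisymm
    · refine Set.iUnion_subset fun i => ?_
      intro y hy
      exact ⟨Set.mem_univ y, hy.2⟩
    · intro y hy
      have hyinj : Function.Injective y := not_not.mp hy.2
      obtain ⟨i, hi⟩ := rank_surj hyinj hr
      exact Set.mem_iUnion.mpr ⟨i, hi, hy.2⟩
  have hsum : ∑ i : Fin (m + 1), π (D i) = 1 := by
    rw [← tsum_fintype (L := .unconditional _), ← measure_iUnion hdisj hDmeas, hcover,
      measure_diff_null hNnull, measure_univ]
  have hDC : ∀ i, π (D i) = π (C 0) := by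
    intro i
    rw [hD]
    simp only
    rw [measure_diff_null hNnull]
    exact pi_card_swap i r
  rw [Finset.sum_congr rfl fun i _ => hDC i, Finset.sum_const, Finset.card_univ,
    Fintype.card_fin, nsmul_eq_mul] at hsum
  have hne : ((m : ℝ≥0∞) + 1) ≠ 0 := by simp
  have htop : ((m : ℝ≥0∞) + 1) ≠ ⊤ := by simp
  have hcast : ((m + 1 : ℕ) : ℝ≥0∞) = (m : ℝ≥0∞) + 1 := by push_cast; ring
  rw [hcast] at hsum
  calc π (C 0) = (((m : ℝ≥0∞) + 1)⁻¹ * ((m : ℝ≥0∞) + 1)) * π (C 0) := by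
        rw [ENNReal.inv_mul_cancel hne htop, one_mul]
    _ = ((m : ℝ≥0∞) + 1)⁻¹ * (((m : ℝ≥0∞) + 1) * π (C 0)) := by rw [mul_assoc]
    _ = ((m : ℝ≥0∞) + 1)⁻¹ := by rw [hsum, mul_one]
    _ = 1 / ((m : ℝ≥0∞) + 1) := (one_div _).symm

lemma pi_card_lt (hatom : ∀ a : ℝ, μ {a} = 0) {m k : ℕ} (hk : k ≤ m + 1) :
    Measure.pi (fun _ : Fin (m + 1) => μ)
      {y | (Finset.univ.filter fun j => y j < y 0).card < k}
        = (k : ℝ≥0∞) / ((m : ℝ≥0∞) + 1) := by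
  set π := Measure.pi (fun _ : Fin (m + 1) => μ) with hπ
  have hA : {y : Fin (m + 1) → ℝ | (Finset.univ.filter fun j => y j < y 0).card < k}
      = ⋃ r ∈ Finset.range k,
        {y | (Finset.univ.filter fun j => y j < y 0).card = r} := by
    ext y
    simp only [Set.mem_setOf_eq, Set.mem_iUnion, Finset.mem_range]
    constructor
    · intro h; exact ⟨_, h, rfl⟩
    · rintro ⟨r, hr, h⟩; omega
  have hd : Set.PairwiseDisjoint (↑(Finset.range k))
      (fun r => {y : Fin (m + 1) → ℝ | (Finset.univ.filter fun j => y j < y 0).card = r}) := by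
    intro r _ r' _ hne
    rw [Function.onFun, Set.disjoint_left]
    intro y hy hy'
    exact hne (hy.symm.trans hy')
  have hbu := measure_biUnion_finset (μ := π) hd
    (fun r _ => measurable_card_filter 0 (MeasurableSet.singleton r))
  rw [hA, hbu]
  rw [Finset.sum_congr rfl fun r hr => pi_card_eq hatom (by
    have := Finset.mem_range.mp hr; omega)]
  rw [Finset.sum_const, Finset.card_range, nsmul_eq_mul, mul_one_div]

end Meas

/-- Let `t_1, …, t_n` be i.i.d. real random variables with continuous CDF `F`, let `t_{(k)}`
be the `k`-th order statistic, and let `k̂` be an `ε`-approximate rank of `t_{(k)}`, i.e.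
`|k̂ − k| ≤ ε n`.  If `X` is a fresh independent sample from `F`, then
`|P(X ≤ t_{(k)}) − (k̂ + 0.5) / (n + 1)| ≤ (⌊ε n⌋ + 0.5) / (n + 1)`. -/
theorem approx_rank_prob_bound
    {Ω : Type*} [MeasureSpace Ω] [IsProbabilityMeasure (ℙ : Measure Ω)]
    (n : ℕ) (t : Fin n → Ω → ℝ)
    (μ : Measure ℝ) [IsProbabilityMeasure μ]
    (hmeas : ∀ j, Measurable (t j))
    (hlaw : ∀ j, Measure.map (t j) ℙ = μ)
    (hindep : iIndepFun t ℙ)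
    (hcont : Continuous fun x => (μ (Set.Iic x)).toReal)
    (k : ℕ) (hk1 : 1 ≤ k) (hkn : k ≤ n)
    (ε : ℝ) (hε0 : 0 < ε) (hε1 : ε < 1)
    (khat : ℕ) (hkhat : |(khat : ℝ) - (k : ℝ)| ≤ ε * n)
    (X : Ω → ℝ) (hX : Measurable X) (hXlaw : Measure.map X ℙ = μ)
    (hXindep : IndepFun X (fun ω => fun j => t j ω) ℙ) :
    |(ℙ {ω | X ω ≤ orderStat (fun j => t j ω) k}).toReal
        - ((khat : ℝ) + 0.5) / ((n : ℝ) + 1)|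
      ≤ ((Nat.floor (ε * n) : ℝ) + 0.5) / ((n : ℝ) + 1) := by
  have hatom : ∀ a : ℝ, μ {a} = 0 := os_atomless hcont
  -- the joint vector of all n+1 samples
  set g : Ω → (Fin (n + 1) → ℝ) := fun ω => Fin.cons (X ω) (fun j => t j ω) with hgdef
  have hg : Measurable g := by
    refine measurable_pi_lambda _ fun i => ?_
    induction i using Fin.cases with
    | zero => simpa [hgdef] using hX
    | succ j => simpa [hgdef] using hmeas j
  set π := Measure.pi (fun _ : Fin (n + 1) => μ) with hπdef
  -- the joint law is the product measure
  have hglaw : Measure.map g ℙ = π := by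
    rw [hπdef]
    refine (Measure.pi_eq fun s hs => ?_).symm
    rw [Measure.map_apply hg (MeasurableSet.univ_pi hs)]
    have hpre : g ⁻¹' Set.pi Set.univ s
        = X ⁻¹' s 0 ∩ (fun ω => fun j => t j ω) ⁻¹' Set.pi Set.univ (fun j : Fin n => s j.succ) := by
      ext ω
      simp only [Set.mem_preimage, Set.mem_pi, Set.mem_univ, true_implies, Set.mem_inter_iff,
        hgdef]
      constructor
      · intro h
        refine ⟨by simpa using h 0, fun j => by simpa using h j.succ⟩
      · rintro ⟨h0, hsucc⟩ i
        induction i using Fin.cases with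
        | zero => simpa using h0
        | succ j => simpa using hsucc j
    rw [hpre, hXindep.measure_inter_preimage_eq_mul _ _ (hs 0)
      (MeasurableSet.univ_pi fun j => hs j.succ)]
    have h1 : ℙ (X ⁻¹' s 0) = μ (s 0) := by rw [← hXlaw, Measure.map_apply hX (hs 0)]
    have h2 : ℙ ((fun ω => fun j => t j ω) ⁻¹' Set.pi Set.univ (fun j : Fin n => s j.succ))
        = ∏ j : Fin n, μ (s j.succ) := by
      rw [← Measure.map_apply (measurable_pi_lambda _ fun j => hmeas j)
        (MeasurableSet.univ_pi fun j => hs j.succ),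
        map_vec_eq_pi hmeas hlaw hindep, Measure.pi_pi]
    rw [h1, h2, Fin.prod_univ_succ]
  obtain ⟨hNmeas, hNnull⟩ := noninj_measurable_null hatom n
  set N : Set (Fin (n + 1) → ℝ) := {y | ¬ Function.Injective y} with hNdef
  set A : Set (Fin (n + 1) → ℝ) :=
    {y | (Finset.univ.filter fun j => y j < y 0).card < k} with hAdef
  set B : Set (Fin (n + 1) → ℝ) :=
    {y | y 0 ≤ orderStat (fun j : Fin n => y j.succ) k} with hBdef
  have hAmeas : MeasurableSet A := by
    have : A = (fun y : Fin (n + 1) → ℝ =>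
        (Finset.univ.filter fun j => y j < y 0).card) ⁻¹' Set.Iio k := rfl
    rw [this]
    exact measurable_card_filter 0 measurableSet_Iio
  -- outside the null set N, the events A and B agree
  have hBA : ∀ y : Fin (n + 1) → ℝ, y ∉ N → (y ∈ B ↔ y ∈ A) := by
    intro y hy
    have hyinj : Function.Injective y := not_not.mp hy
    have hxne : ∀ j : Fin n, y 0 ≠ y j.succ := by
      intro j h
      exact (Fin.succ_ne_zero j).symm (hyinj h)
    have hiff := le_orderStat_iff (fun j : Fin n => y j.succ) k hk1 hkn hxne
    have hcards : (Finset.univ.filter fun j : Fin (n + 1) => y j < y 0).card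
        = (Finset.univ.filter fun i : Fin n => y i.succ < y 0).card := by
      have himg : (Finset.univ.filter fun j : Fin (n + 1) => y j < y 0)
          = (Finset.univ.filter fun i : Fin n => y i.succ < y 0).image Fin.succ := by
        ext j
        simp only [Finset.mem_filter, Finset.mem_univ, true_and, Finset.mem_image]
        induction j using Fin.cases with
        | zero =>
          simp only [lt_irrefl, false_iff, not_exists]
          intro i
          rintro ⟨-, h⟩
          exact (Fin.succ_ne_zero i) h
        | succ i =>
          constructor
          · intro h; exact ⟨i, h, rfl⟩
          · rintro ⟨i', hi', he⟩
            rwa [← Fin.succ_injective n he]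
      rw [himg, Finset.card_image_of_injective _ (Fin.succ_injective n)]
    simp only [hBdef, hAdef, Set.mem_setOf_eq]
    rw [hiff, hcards]
  have hBsub : B ⊆ A ∪ N := by
    intro y hy
    by_cases hN : y ∈ N
    · exact Or.inr hN
    · exact Or.inl ((hBA y hN).mp hy)
  have hAsub : A ⊆ B ∪ N := by
    intro y hy
    by_cases hN : y ∈ N
    · exact Or.inr hN
    · exact Or.inl ((hBA y hN).mpr hy)
  have hEB : {ω | X ω ≤ orderStat (fun j => t j ω) k} = g ⁻¹' B := by
    ext ω
    simp only [Set.mem_setOf_eq, Set.mem_preimage, hBdef, hgdef, Fin.cons_zero, Fin.cons_succ]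
  have hgN : ℙ (g ⁻¹' N) = 0 := by
    rw [← Measure.map_apply hg hNmeas, hglaw]
    exact hNnull
  have hgA : ℙ (g ⁻¹' A) = π A := by
    rw [← Measure.map_apply hg hAmeas, hglaw]
  have hle1 : ℙ {ω | X ω ≤ orderStat (fun j => t j ω) k} ≤ π A := by
    calc ℙ {ω | X ω ≤ orderStat (fun j => t j ω) k}
        = ℙ (g ⁻¹' B) := by rw [hEB]
      _ ≤ ℙ (g ⁻¹' A ∪ g ⁻¹' N) := measure_mono (by
          rw [← Set.preimage_union]; exact Set.preimage_mono hBsub)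
      _ ≤ ℙ (g ⁻¹' A) + ℙ (g ⁻¹' N) := measure_union_le _ _
      _ = π A := by rw [hgA, hgN, add_zero]
  have hle2 : π A ≤ ℙ {ω | X ω ≤ orderStat (fun j => t j ω) k} := by
    calc π A = ℙ (g ⁻¹' A) := hgA.symm
      _ ≤ ℙ (g ⁻¹' B ∪ g ⁻¹' N) := measure_mono (by
          rw [← Set.preimage_union]; exact Set.preimage_mono hAsub)
      _ ≤ ℙ (g ⁻¹' B) + ℙ (g ⁻¹' N) := measure_union_le _ _
      _ = ℙ {ω | X ω ≤ orderStat (fun j => t j ω) k} := by rw [hgN, add_zero, hEB]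
  have hPE : ℙ {ω | X ω ≤ orderStat (fun j => t j ω) k} = π A := le_antisymm hle1 hle2
  have hπA : π A = (k : ℝ≥0∞) / ((n : ℝ≥0∞) + 1) := pi_card_lt hatom (by omega)
  have htoReal : (ℙ {ω | X ω ≤ orderStat (fun j => t j ω) k}).toReal
      = (k : ℝ) / ((n : ℝ) + 1) := by
    have h13 : ((k : ℝ≥0∞)).toReal = (k : ℝ) := by simp
    have h14 : (((n : ℝ≥0∞)) + 1).toReal = (n : ℝ) + 1 := by
      rw [ENNReal.toReal_add (by simp) (by simp)]
      simp
    rw [hPE, hπA, ENNReal.toReal_div, h13, h14]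
  rw [htoReal]
  -- final arithmetic
  have hn1 : (0 : ℝ) < (n : ℝ) + 1 := by positivity
  rw [div_sub_div_same, abs_div, abs_of_pos hn1]
  have hnum : |(k : ℝ) - ((khat : ℝ) + 0.5)| ≤ (Nat.floor (ε * n) : ℝ) + 0.5 := by
    have hd : |(khat : ℝ) - k| = (((khat : ℤ) - k).natAbs : ℝ) := by
      rw [Nat.cast_natAbs]
      push_cast
      ring_nf
    have hfl : (((khat : ℤ) - k).natAbs : ℝ) ≤ (Nat.floor (ε * n) : ℝ) := by
      have h11 : ((khat : ℤ) - k).natAbs ≤ Nat.floor (ε * n) := by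
        apply Nat.le_floor
        rw [← hd]
        exact hkhat
      exact_mod_cast h11
    have h9 : |(k : ℝ) - khat| ≤ (Nat.floor (ε * n) : ℝ) := by
      rw [abs_sub_comm, hd]; exact hfl
    have h10 := abs_add_le ((k : ℝ) - khat) (-0.5)
    have h12 : (k : ℝ) - ((khat : ℝ) + 0.5) = ((k : ℝ) - khat) + (-0.5) := by ring
    have habs : |(-0.5 : ℝ)| = 0.5 := by norm_num
    rw [h12]
    linarith
  exact (div_le_div_iff_of_pos_right hn1).mpr hnum
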